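/- Let [b_1,…,b_n] be any even continued fraction and let 1 < m ≤ n. Then (i) φ_P(F(S_m)) = (1 − q^{−1})·(1 + l² + l⁴ + ⋯ + l^{|b_m|−2}), and (ii) Π_{i∈S_m} φ_P(y_i) = −l^{|b_m|−2}·q^{−1}, as elements of K = ℚ(l,s) with q = s². -/

import Mathlib

open scoped BigOperators

/-- Continued fraction value in `ℚ ∪ {∞}`, with `none` playing the role of `∞ = 1/0`.
`[ ] = ∞`, and `[c₁,…,cₙ] = c₁ + 1/[c₂,…,cₙ]` with `x + ∞ = ∞` and `1/∞ = 0`. -/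
def cfVal : List ℤ → Option ℚ
  | [] => none
  | c :: cs =>
    match cfVal cs with
    | none => some (c : ℚ)
    | some x => if x = 0 then none else some ((c : ℚ) + 1 / x)

/-- A continued fraction is positive if every term is at least 1. -/
def PosCF (L : List ℤ) : Prop := ∀ a ∈ L, 1 ≤ a

/-- A continued fraction is even if every term is even and nonzero. -/
def EvenCF (L : List ℤ) : Prop := ∀ b ∈ L, 2 ∣ b ∧ b ≠ 0

/-- `ell L i = ℓ_i = |c₁| + ⋯ + |c_i|`. -/
def ell (L : List ℤ) (i : ℕ) : ℕ := ((L.take i).map Int.natAbs).sum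

/-- `typ L i = t_i = (−1)^(i−1)·sgn(c_i)` for `1 ≤ i ≤ n`, with the convention `t_0 = −1`. -/
def typ (L : List ℤ) (i : ℕ) : ℤ :=
  if i = 0 then -1 else (-1) ^ (i - 1) * Int.sign (L.getD (i - 1) 0)

/-- The conditions of Definition 3.5: every `|c_i| ≥ 1` (i.e. `c_i ≠ 0`), and whenever
`t_i = t_{i+1}` both `|c_i| > 1` and `|c_{i+1}| > 1`. -/
def QCond (L : List ℤ) : Prop :=
  (∀ c ∈ L, c ≠ 0) ∧
  ∀ i : ℕ, 1 ≤ i → i + 1 ≤ L.length → typ L i = typ L (i + 1) →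
    1 < (L.getD (i - 1) 0).natAbs ∧ 1 < (L.getD i 0).natAbs

/-- `v` is a label of the labeled path poset `Q[c₁,…,cₙ]`: `1 ≤ v ≤ ℓₙ − 1`, and `v` is not
one of the removed labels `ℓ_i` with `t_i = t_{i+1}`. -/
def kept (L : List ℤ) (v : ℕ) : Prop :=
  1 ≤ v ∧ v < ell L L.length ∧
  ∀ i ∈ Finset.Ico 1 L.length, typ L i = typ L (i + 1) → v ≠ ell L i

open Classical in
/-- The underlying label set of `Q[c₁,…,cₙ]`. -/
noncomputable def QFinset (L : List ℤ) : Finset ℕ :=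
  (Finset.Ioo 0 (ell L L.length)).filter (kept L)

/-- The index `i` of the segment `(ℓ_{i−1}, ℓ_i]` containing the label `v`. -/
def seg (L : List ℤ) (v : ℕ) : ℕ :=
  1 + ((Finset.range L.length).filter (fun i => ell L (i + 1) < v)).card

/-- `u < v` are consecutive labels of `Q[c₁,…,cₙ]`. -/
def consec (L : List ℤ) (u v : ℕ) : Prop :=
  kept L u ∧ kept L v ∧ u < v ∧ ∀ w, u < w → w < v → ¬ kept L w

/-- The sign of the Hasse edge between consecutive labels `u < v` of `Q[c₁,…,cₙ]`:
if no label is skipped the edge lies in the segment of `v` and has sign `t_{seg v}`;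
if a removed junction label `ℓ_j` (with `t_j = t_{j+1}`) is skipped, the edge joining the
two adjacent chains has sign `−t_j = −t_{seg v}`. -/
def edgeSign (L : List ℤ) (u v : ℕ) : ℤ :=
  if u + 1 = v then typ L (seg L v) else -typ L (seg L v)

/-- The covering relation of `Q[c₁,…,cₙ]`: consecutive labels `u < v` give a cover `u ⋖ v`
when the corresponding edge sign is `1`, and a cover `v ⋖ u` when it is `−1`. -/
def pcov (L : List ℤ) (u v : ℕ) : Prop :=
  (consec L u v ∧ edgeSign L u v = 1) ∨ (consec L v u ∧ edgeSign L v u = -1)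

/-- The order of the labeled path poset `Q[c₁,…,cₙ]` (on labels). -/
def ple (L : List ℤ) : ℕ → ℕ → Prop := Relation.ReflTransGen (pcov L)

/-- The order of `Q[c₁,…,cₙ]` as a relation on its underlying label set. -/
noncomputable def pleRel (L : List ℤ) :
    {v : ℕ // v ∈ QFinset L} → {v : ℕ // v ∈ QFinset L} → Prop :=
  fun a b => ple L (a : ℕ) (b : ℕ)

/-- Order ideals (downward-closed subsets) of `Q[c₁,…,cₙ]`. -/
def isIdeal (L : List ℤ) (I : Finset ℕ) : Prop :=
  I ⊆ QFinset L ∧ ∀ u v : ℕ, ple L u v → v ∈ I → u ∈ I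

open Classical in
/-- The F-polynomial `F[c₁,…,cₙ] = F(Q[c₁,…,cₙ]) = Σ_I Π_{i∈I} y_i ∈ ℤ[y₁,y₂,…]`,
the sum over all order ideals `I` of `Q[c₁,…,cₙ]`. -/
noncomputable def Fpoly (L : List ℤ) : MvPolynomial ℕ ℤ :=
  ∑ I ∈ (QFinset L).powerset, if isIdeal L I then ∏ i ∈ I, MvPolynomial.X i else 0

/-- The label set of the chain `S_m`: the labels `ℓ_{m−1}+1, …, ℓ_m − 1`. -/
def SmSet (L : List ℤ) (m : ℕ) : Finset ℕ := Finset.Ioo (ell L (m - 1)) (ell L m)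

/-- `lam L m j = λ_m(j)`, the `j`-th vertex of `S_m` from the bottom:
`ℓ_{m−1}+j` if `t_m = 1` and `ℓ_m − j` if `t_m = −1`. -/
def lam (L : List ℤ) (m j : ℕ) : ℕ :=
  if typ L m = 1 then ell L (m - 1) + j else ell L m - j

/-- Order ideals of the chain `S_m` (ordered by labels if `t_m = 1`, reversed if `t_m = −1`). -/
def chainIdeal (L : List ℤ) (m : ℕ) (I : Finset ℕ) : Prop :=
  I ⊆ SmSet L m ∧
  ∀ u ∈ SmSet L m, ∀ v ∈ SmSet L m,
    (if typ L m = 1 then u ≤ v else v ≤ u) → v ∈ I → u ∈ I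

open Classical in
/-- The F-polynomial `F(S_m)` of the chain `S_m`. -/
noncomputable def FS (L : List ℤ) (m : ℕ) : MvPolynomial ℕ ℤ :=
  ∑ I ∈ (SmSet L m).powerset, if chainIdeal L m I then ∏ i ∈ I, MvPolynomial.X i else 0

noncomputable section

/-- The field `K = ℚ(l,s)` of rational functions in two variables over `ℚ`. -/
abbrev KK : Type := FractionRing (MvPolynomial (Fin 2) ℚ)

/-- The variable `l` of `K = ℚ(l,s)`. -/
def lK : KK := algebraMap (MvPolynomial (Fin 2) ℚ) KK (MvPolynomial.X 0)

/-- The variable `s = q^{1/2}` of `K = ℚ(l,s)`. -/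
def sK : KK := algebraMap (MvPolynomial (Fin 2) ℚ) KK (MvPolynomial.X 1)

/-- `q = s²`. -/
def qK : KK := sK ^ 2

/-- `w = (1 − l²q)/(1 − q⁻¹)`. -/
def wK : KK := (1 - lK ^ 2 * qK) / (1 - qK⁻¹)

/-- The values of the specialization `φ_P` (associated to the even continued fraction `L`,
which only matters through the sign of `b₁`): `y₁ ↦ l²·w⁻¹` if `b₁ > 0` and `y₁ ↦ q⁻²·w`
if `b₁ < 0`; `y_{2i} ↦ −l²q` and `y_{2i+1} ↦ −q⁻¹` for `i ≥ 1`. -/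
def phiPvar (L : List ℤ) (i : ℕ) : KK :=
  if i = 1 then (if 0 < L.headI then lK ^ 2 * wK⁻¹ else qK⁻¹ ^ 2 * wK)
  else if i % 2 = 0 then -(lK ^ 2 * qK) else -qK⁻¹

/-- The specialization `φ_P : ℤ[y₁,y₂,…] → K`. -/
def phiP (L : List ℤ) (p : MvPolynomial ℕ ℤ) : KK :=
  MvPolynomial.eval₂ (Int.castRingHom KK) (phiPvar L) p

end


noncomputable def fvalK : ℕ → KK := fun v => if v % 2 = 0 then -(lK ^ 2 * qK) else -qK⁻¹

noncomputable def valK : ℕ → KK := fun j => if j % 2 = 0 then lK ^ j else -(qK⁻¹ * lK ^ (j - 1))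

lemma sK_ne_zero : sK ≠ 0 := by
  intro h
  apply MvPolynomial.X_ne_zero (R := ℚ) (1 : Fin 2)
  apply IsFractionRing.injective (MvPolynomial (Fin 2) ℚ) KK
  rw [map_zero]; exact h

lemma qK_ne_zero : qK ≠ 0 := pow_ne_zero 2 sK_ne_zero

lemma valK_step (j v : ℕ) (hv : v % 2 = (j + 1) % 2) : valK j * fvalK v = valK (j + 1) := by
  rcases Nat.even_or_odd j with hj | hj
  · have h0 : j % 2 = 0 := Nat.even_iff.mp hj
    have h1 : (j + 1) % 2 = 1 := by omega
    have h2 : v % 2 = 1 := by omega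
    have h3 : j + 1 - 1 = j := by omega
    simp only [valK, fvalK, h0, h1, h2, h3, if_pos rfl]
    norm_num
    ring
  · have h0 : j % 2 = 1 := Nat.odd_iff.mp hj
    have h1 : (j + 1) % 2 = 0 := by omega
    have h2 : v % 2 = 0 := by omega
    simp only [valK, fvalK, h0, h1, h2, if_pos rfl]
    norm_num
    have e : j + 1 = (j - 1) + 2 := by omega
    rw [e, pow_add]
    field_simp [qK_ne_zero]

lemma prodA (a : ℕ) (ha : a % 2 = 0) : ∀ j : ℕ, ∏ v ∈ Finset.Ioo a (a + 1 + j), fvalK v = valK j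
  | 0 => by
    have h : Finset.Ioo a (a + 1 + 0) = ∅ := by ext x; simp [Finset.mem_Ioo]
    simp [h, valK]
  | (j + 1) => by
    have h1 : Finset.Ioo a (a + 1 + (j + 1)) = insert (a + 1 + j) (Finset.Ioo a (a + 1 + j)) := by
      ext x; simp [Finset.mem_Ioo]; omega
    rw [h1, Finset.prod_insert (by simp [Finset.mem_Ioo]), prodA a ha j, mul_comm]
    exact valK_step j (a + 1 + j) (by omega)

lemma prodB (b : ℕ) (hb : b % 2 = 0) : ∀ j : ℕ, j + 1 ≤ b → ∏ v ∈ Finset.Ioo (b - 1 - j) b, fvalK v = valK j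
  | 0, _ => by
    have h : Finset.Ioo (b - 1 - 0) b = ∅ := by ext x; simp [Finset.mem_Ioo]; omega
    rw [h]; simp [valK]
  | (j + 1), h => by
    have h1 : Finset.Ioo (b - 1 - (j + 1)) b = insert (b - 1 - j) (Finset.Ioo (b - 1 - j) b) := by
      ext x; simp [Finset.mem_Ioo]; omega
    rw [h1, Finset.prod_insert (by simp [Finset.mem_Ioo]), prodB b hb j (by omega), mul_comm]
    refine valK_step j (b - 1 - j) ?_
    omega

lemma sumValK : ∀ k : ℕ, ∑ j ∈ Finset.range (2 * k), valK j = (1 - qK⁻¹) * ∑ i ∈ Finset.range k, lK ^ (2 * i)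
  | 0 => by simp
  | (k + 1) => by
    have h2 : 2 * (k + 1) = (2 * k) + 1 + 1 := by ring
    rw [h2, Finset.sum_range_succ, Finset.sum_range_succ, sumValK k, Finset.sum_range_succ]
    have e0 : (2 * k) % 2 = 0 := by omega
    have e1 : (2 * k + 1) % 2 = 1 := by omega
    have e2 : 2 * k + 1 - 1 = 2 * k := by omega
    simp only [valK, e0, e1, e2, if_pos rfl]
    norm_num
    ring

lemma ell_succ (L : List ℤ) (i : ℕ) (hi : i < L.length) :
    ell L (i + 1) = ell L i + (L.getD i 0).natAbs := by
  unfold ell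
  rw [List.take_succ, List.map_append, List.sum_append]
  congr 1
  rw [List.getElem?_eq_getElem hi]
  simp [List.getD_eq_getElem?_getD, List.getElem?_eq_getElem hi]

lemma ell_mono (L : List ℤ) : Monotone (ell L) := by
  apply monotone_nat_of_le_succ
  intro i
  unfold ell
  rw [List.take_succ, List.map_append, List.sum_append]
  exact Nat.le_add_right _ _

/-- For an even continued fraction `[b₁,…,bₙ]` and `1 < m ≤ n`:
(i) `φ_P(F(S_m)) = (1 − q⁻¹)·(1 + l² + ⋯ + l^{|b_m|−2})`, and
(ii) `Π_{i∈S_m} φ_P(y_i) = −l^{|b_m|−2}·q⁻¹`. -/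
theorem phiP_chain (L : List ℤ) (hL : EvenCF L) (m : ℕ) (hm1 : 1 < m) (hm2 : m ≤ L.length) :
    phiP L (FS L m) =
        (1 - qK⁻¹) * ∑ i ∈ Finset.range ((L.getD (m - 1) 0).natAbs / 2), lK ^ (2 * i) ∧
    ∏ i ∈ SmSet L m, phiPvar L i = -(lK ^ ((L.getD (m - 1) 0).natAbs - 2) * qK⁻¹) := by
  classical
  set a := ell L (m - 1) with ha_def
  set b := ell L m with hb_def
  set B := (L.getD (m - 1) 0).natAbs with hB_def
  have hmL : m - 1 < L.length := by omega
  have hmem : L.getD (m - 1) 0 ∈ L := by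
    rw [List.getD_eq_getElem L 0 hmL]; exact List.getElem_mem _
  obtain ⟨hdvd, hne0⟩ := hL _ hmem
  have h2B : 2 ∣ B := Int.natAbs_dvd_natAbs.mpr hdvd
  have hB2 : 2 ≤ B := by
    have h3 : B ≠ 0 := Int.natAbs_ne_zero.mpr hne0
    omega
  have hBeven : B % 2 = 0 := by omega
  have hab : b = a + B := by
    have h := ell_succ L (m - 1) hmL
    rw [show m - 1 + 1 = m from by omega] at h
    exact h
  have haeven : a % 2 = 0 := by
    have h2 : 2 ∣ a := by
      rw [ha_def]
      unfold ell
      apply List.dvd_sum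
      intro x hx
      simp only [List.mem_map] at hx
      obtain ⟨c, hc, rfl⟩ := hx
      have hcL := (hL c (List.take_subset _ _ hc)).1
      simpa using Int.natAbs_dvd_natAbs.mpr hcL
    omega
  have hbeven : b % 2 = 0 := by omega
  have ha2 : 2 ≤ a := by
    have h1 : ell L 1 ≤ a := by rw [ha_def]; exact ell_mono L (by omega)
    obtain ⟨c, t, rfl⟩ : ∃ c t, L = c :: t := by
      cases L with
      | nil => simp at hm2; omega
      | cons c t => exact ⟨c, t, rfl⟩
    have hc := hL c (by simp)
    have hc2 : 2 ≤ c.natAbs := by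
      have g1 : 2 ∣ c.natAbs := by simpa using Int.natAbs_dvd_natAbs.mpr hc.1
      have g2 : c.natAbs ≠ 0 := Int.natAbs_ne_zero.mpr hc.2
      omega
    have he1 : ell (c :: t) 1 = c.natAbs := by simp [ell]
    omega
  have hSm : SmSet L m = Finset.Ioo a b := rfl
  set F : ℕ → Finset ℕ :=
    fun j => if typ L m = 1 then Finset.Ioo a (a + 1 + j) else Finset.Ioo (b - 1 - j) b
    with hF_def
  have hcardF : ∀ j, j < B → (F j).card = j := by
    intro j hj
    by_cases ht : typ L m = 1 <;>
      simp only [hF_def, ht, if_true, if_false, Nat.card_Ioo] <;> omega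
  have hideal_iff : ∀ I : Finset ℕ, chainIdeal L m I ↔ ∃ j < B, I = F j := by
    intro I
    constructor
    · rintro ⟨hsub, hdc⟩
      rw [hSm] at hsub
      have hcard : I.card < B := by
        have h := Finset.card_le_card hsub
        rw [Nat.card_Ioo] at h
        omega
      refine ⟨I.card, hcard, ?_⟩
      by_cases ht : typ L m = 1
      · simp only [hF_def, ht, if_true]
        rcases I.eq_empty_or_nonempty with rfl | hne
        · ext x; simp [Finset.mem_Ioo]
        · set M := I.max' hne with hM_def
          have hMI : M ∈ I := I.max'_mem hne
          have hMab : M ∈ Finset.Ioo a b := hsub hMI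
          have haM : a < M := (Finset.mem_Ioo.mp hMab).1
          have hMb : M < b := (Finset.mem_Ioo.mp hMab).2
          have hIoc : I = Finset.Ioc a M := by
            ext x
            simp only [Finset.mem_Ioc]
            constructor
            · intro hx
              exact ⟨(Finset.mem_Ioo.mp (hsub hx)).1, Finset.le_max' I x hx⟩
            · rintro ⟨h1, h2⟩
              refine hdc x ?_ M ?_ ?_ hMI
              · rw [hSm, Finset.mem_Ioo]; omega
              · rw [hSm]; exact hMab
              · rw [if_pos ht]; exact h2
          have hcc : I.card = M - a := by rw [hIoc, Nat.card_Ioc]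
          rw [hcc, hIoc]
          ext x
          simp only [Finset.mem_Ioc, Finset.mem_Ioo]
          omega
      · simp only [hF_def, ht, if_false]
        rcases I.eq_empty_or_nonempty with rfl | hne
        · ext x; simp [Finset.mem_Ioo]; omega
        · set M := I.min' hne with hM_def
          have hMI : M ∈ I := I.min'_mem hne
          have hMab : M ∈ Finset.Ioo a b := hsub hMI
          have haM : a < M := (Finset.mem_Ioo.mp hMab).1
          have hMb : M < b := (Finset.mem_Ioo.mp hMab).2
          have hIco : I = Finset.Ico M b := by
            ext x
            simp only [Finset.mem_Ico]
            constructor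
            · intro hx
              exact ⟨Finset.min'_le I x hx, (Finset.mem_Ioo.mp (hsub hx)).2⟩
            · rintro ⟨h1, h2⟩
              refine hdc x ?_ M ?_ ?_ hMI
              · rw [hSm, Finset.mem_Ioo]; omega
              · rw [hSm]; exact hMab
              · rw [if_neg ht]; exact h1
          have hcc : I.card = b - M := by rw [hIco, Nat.card_Ico]
          rw [hcc, hIco]
          ext x
          simp only [Finset.mem_Ico, Finset.mem_Ioo]
          omega
    · rintro ⟨j, hj, rfl⟩
      constructor
      · rw [hSm]
        by_cases ht : typ L m = 1 <;>
          simp only [hF_def, ht, if_true, if_false] <;>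
          · intro x hx
            simp only [Finset.mem_Ioo] at hx ⊢
            omega
      · intro u hu v hv hle hvI
        rw [hSm, Finset.mem_Ioo] at hu hv
        by_cases ht : typ L m = 1
        · rw [if_pos ht] at hle
          simp only [hF_def, ht, if_true, Finset.mem_Ioo] at hvI ⊢
          omega
        · rw [if_neg ht] at hle
          simp only [hF_def, ht, if_false, Finset.mem_Ioo] at hvI ⊢
          omega
  have hFS : phiP L (FS L m) =
      ∑ I ∈ (SmSet L m).powerset.filter (chainIdeal L m), ∏ i ∈ I, phiPvar L i := by
    unfold phiP FS
    rw [MvPolynomial.eval₂_sum, Finset.sum_filter]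
    apply Finset.sum_congr rfl
    intro I _
    split
    · rw [MvPolynomial.eval₂_prod]
      simp [MvPolynomial.eval₂_X]
    · simp
  have hset : (SmSet L m).powerset.filter (chainIdeal L m) = (Finset.range B).image F := by
    ext I
    simp only [Finset.mem_filter, Finset.mem_powerset, Finset.mem_image, Finset.mem_range]
    constructor
    · rintro ⟨hsub, hI⟩
      obtain ⟨j, hj, rfl⟩ := (hideal_iff _).mp hI
      exact ⟨j, hj, rfl⟩
    · rintro ⟨j, hj, rfl⟩
      have h := (hideal_iff (F j)).mpr ⟨j, hj, rfl⟩
      exact ⟨h.1, h⟩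
  have hinj : ∀ x ∈ Finset.range B, ∀ y ∈ Finset.range B, F x = F y → x = y := by
    intro x hx y hy hxy
    simp only [Finset.mem_range] at hx hy
    have h1 := hcardF x hx
    rw [hxy, hcardF y hy] at h1
    omega
  have hphif : ∀ j, j < B → ∏ i ∈ F j, phiPvar L i = ∏ i ∈ F j, fvalK i := by
    intro j hj
    apply Finset.prod_congr rfl
    intro v hv
    have hva : a < v := by
      by_cases ht : typ L m = 1 <;>
        simp only [hF_def, ht, if_true, if_false, Finset.mem_Ioo] at hv <;> omega
    simp only [phiPvar, fvalK, if_neg (show v ≠ 1 by omega)]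
  have hterm : ∀ j, j < B → ∏ i ∈ F j, fvalK i = valK j := by
    intro j hj
    by_cases ht : typ L m = 1
    · simp only [hF_def, ht, if_true]
      exact prodA a haeven j
    · simp only [hF_def, ht, if_false]
      exact prodB b hbeven j (by omega)
  constructor
  · rw [hFS, hset, Finset.sum_image hinj]
    rw [Finset.sum_congr rfl (fun j hj => by
      rw [hphif j (Finset.mem_range.mp hj), hterm j (Finset.mem_range.mp hj)])]
    have hB4 : 2 * (B / 2) = B := by omega
    conv_lhs => rw [← hB4]
    exact sumValK (B / 2)
  · have hSF : SmSet L m = F (B - 1) := by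
      rw [hSm]
      by_cases ht : typ L m = 1 <;>
        simp only [hF_def, ht, if_true, if_false] <;>
        · ext x; simp only [Finset.mem_Ioo]; omega
    rw [hSF, hphif (B - 1) (by omega), hterm (B - 1) (by omega)]
    have h1 : (B - 1) % 2 = 1 := by omega
    have h2 : B - 1 - 1 = B - 2 := by omega
    simp only [valK, h1, h2]
    norm_num
    ring
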